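/- arXiv:2110.06924 — 2 statements merged into one kernel-verified Lean document; each statement's English description precedes it below -/
import Mathlib

section
/- Suppose ᾱ_R, the closure of the restriction of the image operator α_R to Galois sets, is residuated on Galois sets. Then its residual equals β_{R/}(G) = ⋃{F Galois | α_R(F) ⊆ G}, and this union is itself a Galois set (hence a join). -/
def rperp {X Y : Type*} (perp : X → Y → Prop) (U : Set X) : Set Y :=
  {y | ∀ x ∈ U, perp x y}

def lperp {X Y : Type*} (perp : X → Y → Prop) (V : Set Y) : Set X :=
  {x | ∀ y ∈ V, perp x y}

def stable {X Y : Type*} (perp : X → Y → Prop) (A : Set X) : Prop :=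
  A = lperp perp (rperp perp A)

def alphaOp {X : Type*} (R : X → Set X) (U : Set X) : Set X :=
  ⋃ u ∈ U, R u

def abar {X Y : Type*} (perp : X → Y → Prop) (R : X → Set X) (F : Set X) :
    Set X :=
  lperp perp (rperp perp (alphaOp R F))

/-- `β_{R/}(G) = ⋃ {F Galois | α_R(F) ⊆ G}`. -/
def betaR {X Y : Type*} (perp : X → Y → Prop) (R : X → Set X) (G : Set X) :
    Set X :=
  ⋃₀ {F | stable perp F ∧ alphaOp R F ⊆ G}

lemma cl_ext {X Y : Type*} (perp : X → Y → Prop) (U : Set X) :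
    U ⊆ lperp perp (rperp perp U) :=
  fun x hx y hy => hy x hx

lemma cl_mono {X Y : Type*} (perp : X → Y → Prop) {U V : Set X} (h : U ⊆ V) :
    lperp perp (rperp perp U) ⊆ lperp perp (rperp perp V) :=
  fun x hx y hy => hx y (fun z hz => hy z (h hz))

lemma alphaOp_mono {X : Type*} (R : X → Set X) {U V : Set X} (h : U ⊆ V) :
    alphaOp R U ⊆ alphaOp R V := by
  intro x hx
  simp only [alphaOp, Set.mem_iUnion] at *
  obtain ⟨u, hu, hxu⟩ := hx
  exact ⟨u, h hu, hxu⟩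

/-- if `ᾱ_R` is residuated on Galois sets, then its residual
equals `β_{R/}` and `β_{R/}(G)` is itself a Galois set. -/
theorem stmt13 {X Y : Type*} (perp : X → Y → Prop) (R : X → Set X)
    (hres : ∃ bbar : Set X → Set X,
      (∀ G, stable perp G → stable perp (bbar G)) ∧
      (∀ F G, stable perp F → stable perp G →
        (abar perp R F ⊆ G ↔ F ⊆ bbar G))) :
    ∀ F G, stable perp F → stable perp G →
      (abar perp R F ⊆ G ↔ F ⊆ betaR perp R G) ∧ stable perp (betaR perp R G) := by
  obtain ⟨b, hbst, hadj⟩ := hres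
  -- key facts relating abar and alphaOp for stable targets
  have habar : ∀ (F G : Set X), stable perp G →
      (abar perp R F ⊆ G ↔ alphaOp R F ⊆ G) := by
    intro F G hG
    constructor
    · intro h
      exact (cl_ext perp _).trans h
    · intro h
      have := cl_mono perp h
      rw [← hG] at this
      exact this
  -- betaR G = b G for stable G
  have hbeq : ∀ G : Set X, stable perp G → betaR perp R G = b G := by
    intro G hG
    apply Set.Subset.antisymm
    · intro x hx
      obtain ⟨F, ⟨hFst, hFa⟩, hxF⟩ := hx
      have : abar perp R F ⊆ G := (habar F G hG).2 hFa
      exact (hadj F G hFst hG).1 this hxF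
    · intro x hx
      have hbG : stable perp (b G) := hbst G hG
      have habG : abar perp R (b G) ⊆ G := (hadj (b G) G hbG hG).2 (subset_refl _)
      have : alphaOp R (b G) ⊆ G := (cl_ext perp _).trans habG
      exact ⟨b G, ⟨hbG, this⟩, hx⟩
  intro F G hF hG
  rw [hbeq G hG]
  exact ⟨hadj F G hF hG, hbst G hG⟩
end

section
/- Let L be a bounded lattice, X its set of filters, Y its set of ideals, with x ⊥ y iff x ∩ y ≠ ∅. For each a ∈ L, the set ζ₁(a) = {x ∈ X | a ∈ x} equals Γ(x_a) = ^⊥{y_a}, where x_a is the principal filter and y_a the principal ideal generated by a; in particular ζ₁(a) is a Galois stable set, and a ↦ ζ₁(a) is a lattice embedding: ζ₁(a ∧ b) = ζ₁(a) ∩ ζ₁(b) and ζ₁(a ∨ b) = the Galois closure of ζ₁(a) ∪ ζ₁(b), with ζ₁ injective. -/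
/-- A (lattice) filter: nonempty, upward closed, closed under meets. -/
def isFilter {L : Type*} [Lattice L] (x : Set L) : Prop :=
  x.Nonempty ∧ (∀ a b, a ∈ x → a ≤ b → b ∈ x) ∧
    (∀ a b, a ∈ x → b ∈ x → a ⊓ b ∈ x)

/-- A (lattice) ideal: nonempty, downward closed, closed under joins. -/
def isIdeal {L : Type*} [Lattice L] (y : Set L) : Prop :=
  y.Nonempty ∧ (∀ a b, a ∈ y → b ≤ a → b ∈ y) ∧
    (∀ a b, a ∈ y → b ∈ y → a ⊔ b ∈ y)

/-- The set of filters of `L`. -/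
def Filt (L : Type*) [Lattice L] := {x : Set L // isFilter x}

/-- The set of ideals of `L`. -/
def Idl (L : Type*) [Lattice L] := {y : Set L // isIdeal y}

/-- The canonical polarity relation: `x ⊥ y` iff `x ∩ y ≠ ∅`. -/
def perpF {L : Type*} [Lattice L] (x : Filt L) (y : Idl L) : Prop :=
  ∃ c, c ∈ x.1 ∧ c ∈ y.1

/-- The principal filter `x_a = {b | a ≤ b}`. -/
def pFilt {L : Type*} [Lattice L] (a : L) : Filt L :=
  ⟨{b | a ≤ b}, ⟨a, le_refl a⟩, fun _ _ hb hbc => le_trans hb hbc,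
    fun _ _ hb hc => le_inf hb hc⟩

/-- The principal ideal `y_a = {b | b ≤ a}`. -/
def pIdl {L : Type*} [Lattice L] (a : L) : Idl L :=
  ⟨{b | b ≤ a}, ⟨a, le_refl a⟩, fun _ _ hb hbc => le_trans hbc hb,
    fun _ _ hb hc => sup_le hb hc⟩

/-- The representation map `ζ₁(a) = {x ∈ Filt(L) | a ∈ x}`. -/
def zeta1 {L : Type*} [Lattice L] (a : L) : Set (Filt L) :=
  {x | a ∈ x.1}

lemma zeta_eq_lperp {L : Type*} [Lattice L] (a : L) :
    zeta1 a = lperp (perpF (L := L)) {pIdl a} := by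
  ext x
  constructor
  · intro hax y hy
    rcases hy with rfl
    exact ⟨a, hax, le_refl a⟩
  · intro h
    rcases h (pIdl a) rfl with ⟨c, hcx, hca⟩
    exact x.2.2.1 c a hcx hca

lemma rperp_zeta {L : Type*} [Lattice L] (a : L) :
    rperp (perpF (L := L)) (zeta1 a) = {y | a ∈ y.1} := by
  ext y
  constructor
  · intro h
    rcases h (pFilt a) (le_refl a) with ⟨c, hca, hcy⟩
    exact y.2.2.1 c a hcy hca
  · intro hay x hax
    exact ⟨a, hax, hay⟩

/-- `ζ₁(a) = Γ(x_a) = ^⊥{y_a}`; `ζ₁(a)` is Galois stable; and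
`ζ₁` is a lattice embedding: it turns meets into intersections, joins into
Galois closures of unions, and is injective. -/
theorem stmt17 {L : Type*} [Lattice L] [BoundedOrder L] :
    (∀ a : L, zeta1 a = {x : Filt L | (pFilt a).1 ⊆ x.1}) ∧
    (∀ a : L, zeta1 a = lperp (perpF (L := L)) {pIdl a}) ∧
    (∀ a : L, zeta1 a = lperp (perpF (L := L)) (rperp (perpF (L := L)) (zeta1 a))) ∧
    (∀ a b : L, zeta1 (a ⊓ b) = zeta1 a ∩ zeta1 b) ∧
    (∀ a b : L, zeta1 (a ⊔ b) =
      lperp (perpF (L := L)) (rperp (perpF (L := L)) (zeta1 a ∪ zeta1 b))) ∧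
    Function.Injective (zeta1 (L := L)) := by
  refine ⟨?_, fun a => zeta_eq_lperp a, ?_, ?_, ?_, ?_⟩
  · intro a; ext x
    constructor
    · intro hax b hab; exact x.2.2.1 a b hax hab
    · intro h; exact h (le_refl a)
  · intro a
    have h1 : zeta1 (L := L) a ⊆ lperp (perpF (L := L)) (rperp (perpF (L := L)) (zeta1 a)) :=
      fun x hx y hy => hy x hx
    refine le_antisymm h1 ?_
    intro x hx
    have : perpF x (pIdl a) := hx (pIdl a) (by rw [rperp_zeta]; exact le_refl a)
    rcases this with ⟨c, hcx, hca⟩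
    exact x.2.2.1 c a hcx hca
  · intro a b; ext x
    constructor
    · intro h
      exact ⟨x.2.2.1 _ a h inf_le_left, x.2.2.1 _ b h inf_le_right⟩
    · rintro ⟨ha, hb⟩
      exact x.2.2.2 a b ha hb
  · intro a b
    have hr : rperp (perpF (L := L)) (zeta1 a ∪ zeta1 b) = {y | a ⊔ b ∈ y.1} := by
      ext y
      constructor
      · intro h
        have ha : a ∈ y.1 := by
          rcases h (pFilt a) (Or.inl (le_refl a)) with ⟨c, hca, hcy⟩
          exact y.2.2.1 c a hcy hca
        have hb : b ∈ y.1 := by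
          rcases h (pFilt b) (Or.inr (le_refl b)) with ⟨c, hcb, hcy⟩
          exact y.2.2.1 c b hcy hcb
        exact y.2.2.2 a b ha hb
      · rintro hy x (hx | hx)
        · exact ⟨a, hx, y.2.2.1 _ a hy le_sup_left⟩
        · exact ⟨b, hx, y.2.2.1 _ b hy le_sup_right⟩
    rw [hr]
    ext x
    constructor
    · intro h y hy
      exact ⟨a ⊔ b, h, hy⟩
    · intro h
      rcases h (pIdl (a ⊔ b)) (le_refl _) with ⟨c, hcx, hc⟩
      exact x.2.2.1 c (a ⊔ b) hcx hc
  · intro a b hab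
    have ha : pFilt a ∈ zeta1 b := hab ▸ (le_refl a : pFilt a ∈ zeta1 a)
    have hb : pFilt b ∈ zeta1 a := hab.symm ▸ (le_refl b : pFilt b ∈ zeta1 b)
    exact le_antisymm ha hb
end
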